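/- For every prime p and every integer j ≥ 0, the following congruence between integers holds: C(2jp, jp) · ( Σ_{k=0}^{jp} C(jp, k)^2 · C(jp + k, k) · C(2k, jp) ) ≡ C(2j, j) · ( Σ_{k=0}^{j} C(j, k)^2 · C(j + k, k) · C(2k, j) ) (mod p). -/

import Mathlib

open Finset

/-- Lucas-type reduction for a binomial coefficient whose top is a multiple of `p`. -/
lemma lucas_mul_p (p : ℕ) [Fact p.Prime] (m k : ℕ) :
    ((Nat.choose (m * p) k : ℕ) : ZMod p) =
      if p ∣ k then ((Nat.choose m (k / p) : ℕ) : ZMod p) else 0 := by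
  have hp : 0 < p := (Fact.out : p.Prime).pos
  have h := (Choose.choose_modEq_choose_mod_mul_choose_div_nat (p := p) (n := m * p) (k := k))
  have h' : ((Nat.choose (m * p) k : ℕ) : ZMod p) =
      ((Nat.choose (m * p % p) (k % p) * Nat.choose (m * p / p) (k / p) : ℕ) : ZMod p) :=
    (ZMod.natCast_eq_natCast_iff _ _ _).mpr h
  rw [h', Nat.mul_mod_left, Nat.mul_div_cancel _ hp]
  by_cases hd : p ∣ k
  · obtain ⟨c, rfl⟩ := hd
    simp [Nat.mul_mod_right, dvd_mul_right]
  · have : k % p ≠ 0 := fun h0 => hd (Nat.dvd_of_mod_eq_zero h0)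
    simp [Nat.choose_eq_zero_of_lt (Nat.pos_of_ne_zero this), this, hd]

theorem stmt7 (p : ℕ) (hp : p.Prime) (j : ℕ) :
    Nat.choose (2 * j * p) (j * p) *
        (∑ k ∈ Finset.range (j * p + 1),
          Nat.choose (j * p) k ^ 2 * Nat.choose (j * p + k) k * Nat.choose (2 * k) (j * p)) ≡
      Nat.choose (2 * j) j *
        (∑ k ∈ Finset.range (j + 1),
          Nat.choose j k ^ 2 * Nat.choose (j + k) k * Nat.choose (2 * k) j)
      [MOD p] := by
  haveI : Fact p.Prime := ⟨hp⟩
  have hp0 : 0 < p := hp.pos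
  rw [← ZMod.natCast_eq_natCast_iff]
  push_cast
  -- reduce the outer binomial coefficient
  have h1 : ((Nat.choose (2 * j * p) (j * p) : ℕ) : ZMod p) =
      ((Nat.choose (2 * j) j : ℕ) : ZMod p) := by
    rw [lucas_mul_p p (2 * j) (j * p), if_pos (dvd_mul_left p j),
      Nat.mul_div_cancel _ hp0]
  -- abbreviation for summand
  set f : ℕ → ZMod p := fun k =>
    ((Nat.choose (j * p) k : ℕ) : ZMod p) ^ 2 * ((Nat.choose (j * p + k) k : ℕ) : ZMod p)
      * ((Nat.choose (2 * k) (j * p) : ℕ) : ZMod p) with hf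
  have h2 : (∑ k ∈ Finset.range (j * p + 1), f k) =
      ∑ a ∈ Finset.range (j + 1),
        ((Nat.choose j a : ℕ) : ZMod p) ^ 2 * ((Nat.choose (j + a) a : ℕ) : ZMod p)
          * ((Nat.choose (2 * a) j : ℕ) : ZMod p) := by
    have hsub : (Finset.range (j + 1)).image (· * p) ⊆ Finset.range (j * p + 1) := by
      intro x hx
      simp only [Finset.mem_image, Finset.mem_range] at hx ⊢
      obtain ⟨a, ha, rfl⟩ := hx
      have : a * p ≤ j * p := Nat.mul_le_mul_right p (Nat.lt_succ_iff.mp ha)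
      omega
    rw [show (∑ k ∈ Finset.range (j * p + 1), f k) =
        ∑ k ∈ (Finset.range (j + 1)).image (· * p), f k from ?_]
    · rw [Finset.sum_image (fun a _ b _ h => Nat.eq_of_mul_eq_mul_right hp0 h)]
      refine Finset.sum_congr rfl fun a ha => ?_
      simp only [hf]
      have e1 : ((Nat.choose (j * p) (a * p) : ℕ) : ZMod p) =
          ((Nat.choose j a : ℕ) : ZMod p) := by
        rw [lucas_mul_p p j (a * p), if_pos (dvd_mul_left p a), Nat.mul_div_cancel _ hp0]
      have e2 : ((Nat.choose (j * p + a * p) (a * p) : ℕ) : ZMod p) =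
          ((Nat.choose (j + a) a : ℕ) : ZMod p) := by
        rw [show j * p + a * p = (j + a) * p by ring, lucas_mul_p p (j + a) (a * p),
          if_pos (dvd_mul_left p a), Nat.mul_div_cancel _ hp0]
      have e3 : ((Nat.choose (2 * (a * p)) (j * p) : ℕ) : ZMod p) =
          ((Nat.choose (2 * a) j : ℕ) : ZMod p) := by
        rw [show 2 * (a * p) = (2 * a) * p by ring, lucas_mul_p p (2 * a) (j * p),
          if_pos (dvd_mul_left p j), Nat.mul_div_cancel _ hp0]
      rw [e1, e2, e3]
    · symm
      apply Finset.sum_subset hsub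
      intro k hk hknot
      have hnd : ¬ p ∣ k := by
        intro hd
        apply hknot
        simp only [Finset.mem_image, Finset.mem_range]
        refine ⟨k / p, ?_, (Nat.div_mul_cancel hd)⟩
        simp only [Finset.mem_range] at hk
        have : k ≤ j * p := by omega
        have := Nat.div_le_div_right (c := p) this
        rw [Nat.mul_div_cancel _ hp0] at this
        omega
      simp only [hf]
      rw [lucas_mul_p p j k, if_neg hnd]
      ring
  calc ((Nat.choose (2 * j * p) (j * p) : ℕ) : ZMod p) *
        (∑ k ∈ Finset.range (j * p + 1), f k)
      = ((Nat.choose (2 * j) j : ℕ) : ZMod p) *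
        ∑ a ∈ Finset.range (j + 1),
          ((Nat.choose j a : ℕ) : ZMod p) ^ 2 * ((Nat.choose (j + a) a : ℕ) : ZMod p)
            * ((Nat.choose (2 * a) j : ℕ) : ZMod p) := by rw [h1, h2]
    _ = _ := by ring
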